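/- Let p ∈ (1, ∞) and let ρ be an Orlicz function with ρ(t) ≤ c·t^p for all t ∈ [0, 1] and ρ(t) ≤ c·t for all t ≥ 1, for some constant c > 0. Define norms N_k^ρ on ℝ^k inductively by N_1^ρ(x) = |x|, N_2^ρ(x,y) = |x|(1 + ρ(|y|/|x|)) for x ≠ 0, N_2^ρ(0,y) = |y|, and N_k^ρ(x_1, …, x_k) = N_2^ρ(N_{k-1}^ρ(x_1, …, x_{k-1}), x_k) for k ≥ 3. Then there exists a constant A > 0 depending only on c and p such that for every k ≥ 1 and every v ∈ ℝ^k, N_k^ρ(v) ≤ A ‖v‖_{ℓ_p^k}. -/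

import Mathlib

/-- `N₂^ρ(x,y) = |x|(1 + ρ(|y|/|x|))` for `x ≠ 0`, `N₂^ρ(0,y) = |y|`. -/
noncomputable def N2 (ρ : ℝ → ℝ) (x y : ℝ) : ℝ :=
  if x = 0 then |y| else |x| * (1 + ρ (|y| / |x|))

/-- Iterated norms: `Nk ρ k v` is `N_{k+1}^ρ(v₀,…,v_k)`, so `Nk ρ 0 v = |v 0|` and
`Nk ρ (k+1) v = N₂^ρ(Nk ρ k (v ∘ castSucc), v (last))`. -/
noncomputable def Nk (ρ : ℝ → ℝ) : (k : ℕ) → (Fin (k + 1) → ℝ) → ℝ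
  | 0, v => |v 0|
  | k + 1, v => N2 ρ (Nk ρ k (fun i => v i.castSucc)) (v (Fin.last (k + 1)))

lemma rho_nonneg (ρ : ℝ → ℝ) (hmono : MonotoneOn ρ (Set.Ici 0)) (h0 : ρ 0 = 0)
    {t : ℝ} (ht : 0 ≤ t) : 0 ≤ ρ t := by
  have := hmono (Set.mem_Ici.mpr le_rfl) ht ht
  rwa [h0] at this

lemma N2_nonneg (ρ : ℝ → ℝ) (hmono : MonotoneOn ρ (Set.Ici 0)) (h0 : ρ 0 = 0)
    (x y : ℝ) : 0 ≤ N2 ρ x y := by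
  unfold N2
  split
  · exact abs_nonneg _
  · have h1 : 0 ≤ ρ (|y| / |x|) :=
      rho_nonneg ρ hmono h0 (div_nonneg (abs_nonneg _) (abs_nonneg _))
    positivity

lemma Nk_nonneg (ρ : ℝ → ℝ) (hmono : MonotoneOn ρ (Set.Ici 0)) (h0 : ρ 0 = 0)
    (k : ℕ) (v : Fin (k + 1) → ℝ) : 0 ≤ Nk ρ k v := by
  induction k with
  | zero => exact abs_nonneg _
  | succ k ih => exact N2_nonneg ρ hmono h0 _ _

/-- key pointwise estimate: `N2 ρ x y ^ p ≤ x^p + (1+c)^p |y|^p`. -/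
lemma key (p : ℝ) (hp : 1 < p) (c : ℝ) (hc : 0 < c) (ρ : ℝ → ℝ)
    (hmono : MonotoneOn ρ (Set.Ici 0)) (h0 : ρ 0 = 0)
    (hle1 : ∀ t ∈ Set.Icc (0 : ℝ) 1, ρ t ≤ c * t ^ p)
    (hge1 : ∀ t ≥ (1 : ℝ), ρ t ≤ c * t)
    (x y : ℝ) (hx : 0 ≤ x) :
    N2 ρ x y ^ p ≤ x ^ p + (1 + c) ^ p * |y| ^ p := by
  have hp0 : (0 : ℝ) < p := lt_trans one_pos hp
  have hB1 : (1 : ℝ) ≤ (1 + c) ^ p := by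
    calc (1 : ℝ) = 1 ^ p := (Real.one_rpow p).symm
    _ ≤ (1 + c) ^ p := Real.rpow_le_rpow zero_le_one (by linarith) hp0.le
  rcases eq_or_lt_of_le hx with h | h
  · -- x = 0
    have hx0 : x = 0 := h.symm
    simp only [N2, hx0, if_pos rfl, if_true, Real.zero_rpow hp0.ne']
    nlinarith [Real.rpow_nonneg (abs_nonneg y) p]
  · -- x > 0
    have hxne : x ≠ 0 := h.ne'
    have hax : |x| = x := abs_of_pos h
    set t : ℝ := |y| / x with htdef
    have ht0 : 0 ≤ t := div_nonneg (abs_nonneg y) h.le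
    have hxt : x * t = |y| := by rw [htdef, mul_div_assoc', mul_div_right_comm, div_self hxne, one_mul]
    have hN2 : N2 ρ x y = x * (1 + ρ t) := by
      simp only [N2, if_neg hxne, hax, htdef]
    have hρt : 0 ≤ ρ t := rho_nonneg ρ hmono h0 ht0
    rcases le_or_gt t 1 with htle | htgt
    · -- small case
      have hρ : ρ t ≤ c * t ^ p := hle1 t ⟨ht0, htle⟩
      have hu0 : 0 ≤ t ^ p := Real.rpow_nonneg ht0 p
      have hu1 : t ^ p ≤ 1 := Real.rpow_le_one ht0 htle hp0.le
      -- convexity of u ↦ u^p at points 1 and 1+c with weights 1 - t^p, t^p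
      set u : ℝ := t ^ p
      have hconv := (convexOn_rpow hp.le).2 (Set.mem_Ici.mpr (zero_le_one))
        (Set.mem_Ici.mpr (by linarith : (0:ℝ) ≤ 1 + c))
        (by linarith : (0:ℝ) ≤ 1 - u) hu0 (by ring)
      simp only [smul_eq_mul] at hconv
      have h1 : (1 - u) * 1 + u * (1 + c) = 1 + c * u := by ring
      rw [h1, Real.one_rpow] at hconv
      have hkey : (1 + c * u) ^ p ≤ 1 + (1 + c) ^ p * u := by
        nlinarith
      have hbound : N2 ρ x y ≤ x * (1 + c * u) := by
        rw [hN2]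
        have : 1 + ρ t ≤ 1 + c * u := by linarith
        nlinarith
      calc N2 ρ x y ^ p ≤ (x * (1 + c * u)) ^ p := by
            apply Real.rpow_le_rpow (N2_nonneg ρ hmono h0 x y) hbound hp0.le
        _ = x ^ p * (1 + c * u) ^ p := Real.mul_rpow h.le (by nlinarith)
        _ ≤ x ^ p * (1 + (1 + c) ^ p * u) := by
            apply mul_le_mul_of_nonneg_left hkey (Real.rpow_nonneg h.le p)
        _ = x ^ p + (1 + c) ^ p * (x ^ p * t ^ p) := by ring
        _ = x ^ p + (1 + c) ^ p * |y| ^ p := by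
            rw [← Real.mul_rpow h.le ht0, hxt]
    · -- large case
      have hρ : ρ t ≤ c * t := hge1 t htgt.le
      have hbound : N2 ρ x y ≤ x * ((1 + c) * t) := by
        rw [hN2]
        have : 1 + ρ t ≤ (1 + c) * t := by nlinarith
        nlinarith
      calc N2 ρ x y ^ p ≤ (x * ((1 + c) * t)) ^ p := by
            apply Real.rpow_le_rpow (N2_nonneg ρ hmono h0 x y) hbound hp0.le
        _ = (1 + c) ^ p * (x * t) ^ p := by
            rw [show x * ((1 + c) * t) = (1 + c) * (x * t) by ring,
              Real.mul_rpow (by linarith) (by positivity)]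
        _ = (1 + c) ^ p * |y| ^ p := by rw [hxt]
        _ ≤ x ^ p + (1 + c) ^ p * |y| ^ p := by
            nlinarith [Real.rpow_nonneg h.le p]

/-- Kalton's upper `ℓ_p` estimate: if `ρ` is an Orlicz function with `ρ(t) ≤ c·t^p` on
`[0,1]` and `ρ(t) ≤ c·t` for `t ≥ 1`, then `N_k^ρ(v) ≤ A‖v‖_{ℓ_p^k}` for a constant
`A > 0` depending only on `c` and `p`. -/
theorem stmt_13 (p : ℝ) (hp : 1 < p) (c : ℝ) (hc : 0 < c) :
    ∃ A : ℝ, 0 < A ∧ ∀ ρ : ℝ → ℝ,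
      ConvexOn ℝ (Set.Ici 0) ρ → MonotoneOn ρ (Set.Ici 0) →
      ContinuousOn ρ (Set.Ici 0) → ρ 0 = 0 → (∀ t > (0 : ℝ), 0 < ρ t) →
      (∀ t ∈ Set.Icc (0 : ℝ) 1, ρ t ≤ c * t ^ p) →
      (∀ t ≥ (1 : ℝ), ρ t ≤ c * t) →
      ∀ k : ℕ, ∀ v : Fin (k + 1) → ℝ,
        Nk ρ k v ≤ A * (∑ i, |v i| ^ p) ^ (1 / p) := by
  have hp0 : (0 : ℝ) < p := lt_trans one_pos hp
  refine ⟨1 + c, by linarith, fun ρ _ hmono _ h0 _ hle1 hge1 k v => ?_⟩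
  have hB1 : (1 : ℝ) ≤ (1 + c) ^ p := by
    calc (1 : ℝ) = 1 ^ p := (Real.one_rpow p).symm
    _ ≤ (1 + c) ^ p := Real.rpow_le_rpow zero_le_one (by linarith) hp0.le
  -- main claim by induction
  have main : ∀ k : ℕ, ∀ v : Fin (k + 1) → ℝ,
      Nk ρ k v ^ p ≤ (1 + c) ^ p * ∑ i, |v i| ^ p := by
    intro k
    induction k with
    | zero =>
      intro v
      simp only [Nk, Fin.sum_univ_succ, Fin.sum_univ_zero, add_zero]
      nlinarith [Real.rpow_nonneg (abs_nonneg (v 0)) p]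
    | succ k ih =>
      intro v
      have hx : 0 ≤ Nk ρ k (fun i => v i.castSucc) := Nk_nonneg ρ hmono h0 _ _
      have h1 : Nk ρ (k + 1) v ^ p ≤ Nk ρ k (fun i => v i.castSucc) ^ p
          + (1 + c) ^ p * |v (Fin.last (k + 1))| ^ p :=
        key p hp c hc ρ hmono h0 hle1 hge1 _ _ hx
      have h2 := ih (fun i => v i.castSucc)
      rw [Fin.sum_univ_castSucc (f := fun i => |v i| ^ p)]
      calc Nk ρ (k + 1) v ^ p
          ≤ (1 + c) ^ p * (∑ i : Fin (k + 1), |v i.castSucc| ^ p)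
            + (1 + c) ^ p * |v (Fin.last (k + 1))| ^ p := by linarith
        _ = (1 + c) ^ p * ((∑ i : Fin (k + 1), |v i.castSucc| ^ p)
            + |v (Fin.last (k + 1))| ^ p) := by ring
  -- conclude
  have hNk := Nk_nonneg ρ hmono h0 k v
  have hsum : 0 ≤ ∑ i, |v i| ^ p :=
    Finset.sum_nonneg fun i _ => Real.rpow_nonneg (abs_nonneg _) p
  have h3 := Real.rpow_le_rpow (Real.rpow_nonneg hNk p) (main k v)
    (by positivity : (0:ℝ) ≤ 1 / p)
  rw [one_div] at h3 ⊢
  rwa [Real.rpow_rpow_inv hNk hp0.ne',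
    Real.mul_rpow (by positivity) hsum,
    Real.rpow_rpow_inv (by linarith) hp0.ne'] at h3
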